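/- Let F_n be a non-trivial free group on free generators a₁, …, a_n (n ≥ 1) and let Σ = {a₁^{±1}, …, a_n^{±1}} be the standard symmetric generating set. Then the metric space (F_n, d_Σ), where d_Σ is the word metric associated to Σ, has roundness 2. -/

import Mathlib

/-- The set of exponents `q ≥ 1` for which the roundness inequality holds for all
quadruples of points, with respect to the distance function `d`. -/
noncomputable def roundnessSet {X : Type*} (d : X → X → ℝ) : Set ℝ :=
  {q : ℝ | 1 ≤ q ∧ ∀ x00 x01 x10 x11 : X,
    d x00 x11 ^ q + d x01 x10 ^ q ≤
      d x00 x01 ^ q + d x00 x10 ^ q + d x11 x01 ^ q + d x11 x10 ^ q}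

/-- The roundness of a distance function `d` on `X`: the supremum (in `EReal`) of all
exponents `q ≥ 1` for which the roundness inequality holds for all quadruples. -/
noncomputable def roundness {X : Type*} (d : X → X → ℝ) : EReal :=
  sSup ((fun q : ℝ => (q : EReal)) '' roundnessSet d)
/-- The word length of `g` with respect to a generating set `S`:
the least `n` such that `g` is a product of `n` elements of `S`. -/
noncomputable def wordLength {G : Type*} [Group G] (S : Set G) (g : G) : ℕ :=
  sInf {n : ℕ | ∃ l : List G, l.length = n ∧ (∀ x ∈ l, x ∈ S) ∧ l.prod = g}

/-- The word metric on a group `G` associated to a generating set `S`. -/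
noncomputable def wordDist {G : Type*} [Group G] (S : Set G) (g h : G) : ℝ :=
  wordLength S (g⁻¹ * h)

namespace RFG
open FreeGroup List
variable {α : Type*} [DecidableEq α]

/-! ### Longest common prefix of lists -/

/-- Length of the longest common prefix of two lists. -/
def lcp : List α → List α → ℕ
  | a :: u, b :: v => if a = b then lcp u v + 1 else 0
  | _, _ => 0

@[simp] lemma lcp_nil_left (v : List α) : lcp [] v = 0 := by cases v <;> rfl
@[simp] lemma lcp_nil_right (u : List α) : lcp u [] = 0 := by cases u <;> rfl
lemma lcp_cons (a b : α) (u v : List α) :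
    lcp (a :: u) (b :: v) = if a = b then lcp u v + 1 else 0 := rfl

lemma lcp_comm (u v : List α) : lcp u v = lcp v u := by
  induction u generalizing v with
  | nil => simp
  | cons a u ih =>
    rcases v with _ | ⟨b, v⟩
    · simp
    · rw [lcp_cons, lcp_cons, ih]
      by_cases h : a = b
      · simp [h]
      · simp [h, Ne.symm h]

lemma min_lcp_le (v u w : List α) : min (lcp u v) (lcp v w) ≤ lcp u w := by
  induction v generalizing u w with
  | nil => simp
  | cons b v ih =>
    rcases u with _ | ⟨a, u⟩
    · simp
    rcases w with _ | ⟨c, w⟩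
    · simp
    rw [lcp_cons, lcp_cons, lcp_cons]
    by_cases hab : a = b
    · by_cases hbc : b = c
      · simp only [hab, hbc, if_true, hab.trans hbc]
        have := ih u w
        omega
      · simp [hab, hbc]
    · simp [hab]

/-! ### Reduced words -/

/-- No cancellation between two adjacent letters of a word. -/
def NC (a b : α × Bool) : Prop := ¬(a.1 = b.1 ∧ a.2 = !b.2)

lemma chain'_reduce (L : List (α × Bool)) : List.Chain' NC (reduce L) := by
  induction L with
  | nil => exact List.isChain_nil
  | cons x L ih =>
    rw [reduce.cons]
    rcases h : reduce L with _ | ⟨hd, tl⟩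
    · exact List.isChain_singleton _
    · rw [h] at ih
      by_cases hc : x.1 = hd.1 ∧ x.2 = !hd.2
      · simp only [hc, and_self, if_true]
        exact ih.tail
      · simp only [hc, if_false]
        exact List.isChain_cons_cons.2 ⟨hc, ih⟩

lemma reduce_eq_self_of_chain' {L : List (α × Bool)} (h : List.Chain' NC L) :
    reduce L = L := by
  induction L with
  | nil => rfl
  | cons x L ih =>
    rw [reduce.cons, ih h.tail]
    rcases L with _ | ⟨hd, tl⟩
    · rfl
    · have : ¬(x.1 = hd.1 ∧ x.2 = !hd.2) := List.isChain_cons_cons.1 h |>.1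
      simp only [this, if_false]

lemma norm_mk_of_chain' {L : List (α × Bool)} (h : List.Chain' NC L) :
    norm (mk L) = L.length := by
  rw [FreeGroup.norm, toWord_mk, reduce_eq_self_of_chain' h]

lemma chain'_toWord (x : FreeGroup α) : List.Chain' NC x.toWord := by
  have := chain'_reduce x.toWord
  rwa [reduce_toWord] at this

lemma chain'_invRev {u : List (α × Bool)} (h : List.Chain' NC u) :
    List.Chain' NC (invRev u) := by
  unfold List.Chain'
  rw [invRev, List.isChain_reverse, List.isChain_map]
  refine List.IsChain.imp ?_ h
  rintro ⟨a1, a2⟩ ⟨b1, b2⟩ hab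
  simp only [NC, flip, not_and] at *
  intro h1 h2
  exact hab h1.symm (by revert h2; cases a2 <;> cases b2 <;> decide)

lemma chain'_invRev_append {u v : List (α × Bool)} (hu : List.Chain' NC u)
    (hv : List.Chain' NC v)
    (hne : ∀ a ∈ u.head?, ∀ b ∈ v.head?, a ≠ b) :
    List.Chain' NC (invRev u ++ v) := by
  unfold List.Chain'
  rw [List.isChain_append]
  refine ⟨chain'_invRev hu, hv, ?_⟩
  intro x hx y hy
  have hxl : x ∈ (u.head?).map (fun g : α × Bool => (g.1, !g.2)) := by
    rwa [invRev, List.getLast?_reverse, List.head?_map] at hx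
  rcases Option.map_eq_some_iff.1 ((Option.mem_def).1 hxl) with ⟨a, ha, rfl⟩
  have hay := hne a ha y hy
  rintro ⟨h1, h2⟩
  refine hay (Prod.ext h1 ?_)
  have h2' : (!a.2) = !y.2 := h2
  exact Bool.not_inj h2'

/-! ### The norm formula and the four-point condition -/

lemma norm_inv_mul_aux (u : List (α × Bool)) : ∀ v : List (α × Bool),
    List.Chain' NC u → List.Chain' NC v →
    norm ((mk u)⁻¹ * mk v) + 2 * lcp u v = u.length + v.length := by
  induction u with
  | nil =>
    intro v _ hv
    rw [← one_eq_mk, inv_one, one_mul, norm_mk_of_chain' hv]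
    simp
  | cons a u ih =>
    intro v hu hv
    rcases v with _ | ⟨b, v⟩
    · rw [← one_eq_mk, mul_one, norm_inv_eq, norm_mk_of_chain' hu]
      simp
    by_cases hab : a = b
    · subst hab
      have key : (mk (a :: u))⁻¹ * mk (a :: v) = (mk u)⁻¹ * mk v := by
        have h1 : mk (a :: u) = mk [a] * mk u := by rw [mul_mk]; rfl
        have h2 : mk (a :: v) = mk [a] * mk v := by rw [mul_mk]; rfl
        rw [h1, h2, mul_inv_rev]
        group
      rw [key, lcp_cons, if_pos rfl]
      have := ih v hu.tail hv.tail
      simp only [List.length_cons]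
      omega
    · have key : (mk (a :: u))⁻¹ * mk (b :: v) = mk (invRev (a :: u) ++ (b :: v)) := by
        rw [inv_mk, mul_mk]
      have hch : List.Chain' NC (invRev (a :: u) ++ (b :: v)) := by
        refine chain'_invRev_append hu hv ?_
        intro x hx y hy
        simp only [List.head?_cons, Option.mem_def, Option.some_inj] at hx hy
        subst hx; subst hy
        exact hab
      rw [key, norm_mk_of_chain' hch, lcp_cons, if_neg hab]
      simp [invRev_length]

lemma norm_formula (x y : FreeGroup α) :
    norm (x⁻¹ * y) + 2 * lcp x.toWord y.toWord = norm x + norm y := by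
  have := norm_inv_mul_aux x.toWord y.toWord (chain'_toWord x) (chain'_toWord y)
  rwa [mk_toWord, mk_toWord] at this

lemma four_point (x y z : FreeGroup α) :
    norm z + norm (x⁻¹ * y) ≤
      max (norm x + norm (z⁻¹ * y)) (norm y + norm (z⁻¹ * x)) := by
  have e1 := norm_formula x y
  have e2 := norm_formula z y
  have e3 := norm_formula z x
  have hm := min_lcp_le z.toWord x.toWord y.toWord
  rw [lcp_comm x.toWord z.toWord] at hm
  rcases le_total (lcp z.toWord x.toWord) (lcp z.toWord y.toWord) with h | h
  · refine le_trans ?_ (le_max_right _ _)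
    omega
  · refine le_trans ?_ (le_max_left _ _)
    omega

/-! ### The word metric equals the norm -/

lemma prod_map_mk (L : List (α × Bool)) :
    (L.map fun p : α × Bool => cond p.2 (of p.1) (of p.1)⁻¹).prod = mk L := by
  induction L with
  | nil => simp [← one_eq_mk]
  | cons p L ih =>
    rcases p with ⟨i, b⟩
    have hcons : mk ((i, b) :: L) = mk [(i, b)] * mk L := by rw [mul_mk]; rfl
    rw [List.map_cons, List.prod_cons, ih, hcons]
    congr 1
    cases b
    · show (of i)⁻¹ = mk [(i, false)]
      rw [FreeGroup.of, inv_mk]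
      rfl
    · rfl

lemma norm_le_of_list (l : List (FreeGroup α))
    (hl : ∀ x ∈ l, x ∈ (Set.range fun i : α => FreeGroup.of i) ∪
      (Set.range fun i : α => (FreeGroup.of i)⁻¹)) :
    norm l.prod ≤ l.length := by
  induction l with
  | nil => simp
  | cons x l ih =>
    rw [List.prod_cons, List.length_cons]
    refine le_trans (norm_mul_le _ _) ?_
    have hx : norm x = 1 := by
      rcases hl x (by simp) with ⟨i, rfl⟩ | ⟨i, rfl⟩
      · exact norm_of i
      · rw [norm_inv_eq]; exact norm_of i
    have := ih (fun y hy => hl y (by simp [hy]))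
    omega

lemma wordLength_eq_norm (g : FreeGroup α) :
    wordLength ((Set.range fun i : α => FreeGroup.of i) ∪
      (Set.range fun i : α => (FreeGroup.of i)⁻¹)) g = norm g := by
  set S := (Set.range fun i : α => FreeGroup.of i) ∪
      (Set.range fun i : α => (FreeGroup.of i)⁻¹) with hS
  have hmem : norm g ∈ {n : ℕ | ∃ l : List (FreeGroup α),
      l.length = n ∧ (∀ x ∈ l, x ∈ S) ∧ l.prod = g} := by
    refine ⟨g.toWord.map fun p : α × Bool => cond p.2 (of p.1) (of p.1)⁻¹, ?_, ?_, ?_⟩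
    · rw [List.length_map]; rfl
    · intro x hx
      simp only [List.mem_map] at hx
      rcases hx with ⟨⟨i, b⟩, _, rfl⟩
      cases b
      · exact Or.inr ⟨i, rfl⟩
      · exact Or.inl ⟨i, rfl⟩
    · rw [prod_map_mk, mk_toWord]
  refine le_antisymm (Nat.sInf_le hmem) ?_
  refine le_csInf ⟨_, hmem⟩ ?_
  rintro m ⟨l, hlen, hmemS, hprod⟩
  have := norm_le_of_list l hmemS
  rw [hprod, hlen] at this
  exact this

/-! ### The quadratic inequality -/

lemma real_case (a b s1 s2 s3 s4 : ℝ) (ha : 0 ≤ a) (hb : 0 ≤ b)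
    (h1 : 0 ≤ s1) (h2 : 0 ≤ s2) (h3 : 0 ≤ s3) (h4 : 0 ≤ s4)
    (ha1 : a ≤ s1 + s3) (ha2 : a ≤ s2 + s4)
    (hb1 : b ≤ s1 + s2) (hb2 : b ≤ s3 + s4)
    (hab : a + b ≤ s1 + s4) (h14 : s1 + s4 ≤ max (a + b) (s2 + s3)) :
    a^2 + b^2 ≤ s1^2 + s2^2 + s3^2 + s4^2 := by
  rcases le_max_iff.1 h14 with h | h
  · have heq : a + b = s1 + s4 := le_antisymm hab h
    nlinarith [mul_nonneg (sub_nonneg.2 ha1) (sub_nonneg.2 ha2),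
      mul_nonneg (sub_nonneg.2 hb1) (sub_nonneg.2 hb2), sq_nonneg (s1-s4),
      sq_nonneg (s2-s3), sq_nonneg (a-b), mul_nonneg ha hb, mul_nonneg h2 h3,
      mul_nonneg h1 h4]
  · nlinarith [mul_nonneg (sub_nonneg.2 hab) (add_nonneg ha hb),
      mul_nonneg (sub_nonneg.2 h) (add_nonneg h1 h4), sq_nonneg (s1-s2),
      sq_nonneg (s1-s3), sq_nonneg (s2-s4), sq_nonneg (s3-s4), sq_nonneg (a-b),
      mul_nonneg ha hb]

lemma real_main (a b s1 s2 s3 s4 : ℝ) (ha : 0 ≤ a) (hb : 0 ≤ b)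
    (h1 : 0 ≤ s1) (h2 : 0 ≤ s2) (h3 : 0 ≤ s3) (h4 : 0 ≤ s4)
    (ha1 : a ≤ s1 + s3) (ha2 : a ≤ s2 + s4)
    (hb1 : b ≤ s1 + s2) (hb2 : b ≤ s3 + s4)
    (hd : a + b ≤ max (s1 + s4) (s2 + s3))
    (h14 : s1 + s4 ≤ max (a + b) (s2 + s3))
    (h23 : s2 + s3 ≤ max (a + b) (s1 + s4)) :
    a^2 + b^2 ≤ s1^2 + s2^2 + s3^2 + s4^2 := by
  rcases le_max_iff.1 hd with h | h
  · exact real_case a b s1 s2 s3 s4 ha hb h1 h2 h3 h4 ha1 ha2 hb1 hb2 h h14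
  · have := real_case a b s2 s1 s4 s3 ha hb h2 h1 h4 h3
      (by linarith) (by linarith) (by linarith) (by linarith) h h23
    linarith

/-! ### The distance function on the free group -/

/-- The canonical distance on the free group. -/
noncomputable def D (g h : FreeGroup α) : ℝ := (norm (g⁻¹ * h) : ℕ)

lemma D_nonneg (g h : FreeGroup α) : 0 ≤ D g h := Nat.cast_nonneg _

lemma D_symm (g h : FreeGroup α) : D g h = D h g := by
  unfold D
  rw [show h⁻¹ * g = (g⁻¹ * h)⁻¹ by group, norm_inv_eq]

lemma D_triangle (g h k : FreeGroup α) : D g k ≤ D g h + D h k := by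
  unfold D
  rw [show g⁻¹ * k = (g⁻¹ * h) * (h⁻¹ * k) by group]
  exact_mod_cast FreeGroup.norm_mul_le _ _

lemma D_four_point (p q r s : FreeGroup α) :
    D p s + D q r ≤ max (D p q + D s r) (D p r + D s q) := by
  have h := four_point (p⁻¹ * q) (p⁻¹ * r) (p⁻¹ * s)
  rw [show (p⁻¹ * q)⁻¹ * (p⁻¹ * r) = q⁻¹ * r by group,
    show (p⁻¹ * s)⁻¹ * (p⁻¹ * r) = s⁻¹ * r by group,
    show (p⁻¹ * s)⁻¹ * (p⁻¹ * q) = s⁻¹ * q by group] at h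
  unfold D
  have := (Nat.cast_le (α := ℝ)).2 h
  push_cast [Nat.cast_max] at this ⊢
  convert this using 2 <;> ring

lemma D_roundness_two (x00 x01 x10 x11 : FreeGroup α) :
    D x00 x11 ^ 2 + D x01 x10 ^ 2 ≤
      D x00 x01 ^ 2 + D x00 x10 ^ 2 + D x11 x01 ^ 2 + D x11 x10 ^ 2 := by
  have hd := D_four_point x00 x01 x10 x11
  have h14 := D_four_point x00 x11 x10 x01
  rw [D_symm x01 x11] at h14
  have h23 := D_four_point x00 x11 x01 x10
  rw [D_symm x10 x01, D_symm x10 x11] at h23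
  have ha1 : D x00 x11 ≤ D x00 x01 + D x11 x01 := by
    rw [D_symm x11 x01]; exact D_triangle _ _ _
  have ha2 : D x00 x11 ≤ D x00 x10 + D x11 x10 := by
    rw [D_symm x11 x10]; exact D_triangle _ _ _
  have hb1 : D x01 x10 ≤ D x00 x01 + D x00 x10 := by
    rw [D_symm x00 x01]; exact D_triangle _ _ _
  have hb2 : D x01 x10 ≤ D x11 x01 + D x11 x10 := by
    rw [D_symm x11 x01]; exact D_triangle _ _ _
  exact real_main _ _ _ _ _ _ (D_nonneg _ _) (D_nonneg _ _) (D_nonneg _ _)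
    (D_nonneg _ _) (D_nonneg _ _) (D_nonneg _ _) ha1 ha2 hb1 hb2 hd h14 h23

end RFG

/-- The Cayley graph of a non-trivial free group `F_n` (`n ≥ 1`) with respect to the
standard symmetric generating set `{a₁^{±1}, …, a_n^{±1}}` has roundness 2. -/
theorem roundness_free_group (n : ℕ) (hn : 1 ≤ n) :
    roundness (wordDist
      ((Set.range fun i : Fin n => FreeGroup.of i) ∪
        (Set.range fun i : Fin n => (FreeGroup.of i)⁻¹))) = (2 : EReal) := by
  have hD : wordDist
      ((Set.range fun i : Fin n => FreeGroup.of i) ∪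
        (Set.range fun i : Fin n => (FreeGroup.of i)⁻¹)) = RFG.D (α := Fin n) := by
    funext g h
    unfold wordDist RFG.D
    rw [RFG.wordLength_eq_norm]
  rw [hD]
  have h2mem : (2 : ℝ) ∈ roundnessSet (RFG.D (α := Fin n)) := by
    refine ⟨one_le_two, fun x00 x01 x10 x11 => ?_⟩
    have key := RFG.D_roundness_two x00 x01 x10 x11
    have h2 : (2 : ℝ) = ((2 : ℕ) : ℝ) := by norm_num
    simp only [h2, Real.rpow_natCast]
    exact key
  have hub : ∀ q ∈ roundnessSet (RFG.D (α := Fin n)), q ≤ 2 := by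
    rintro q ⟨hq1, hq⟩
    set i0 : Fin n := ⟨0, hn⟩ with hi0
    have h := hq 1 (FreeGroup.of i0) (FreeGroup.of i0) (FreeGroup.of i0 ^ 2)
    have e1 : RFG.D (1 : FreeGroup (Fin n)) (FreeGroup.of i0 ^ 2) = 2 := by
      unfold RFG.D
      rw [inv_one, one_mul, FreeGroup.norm_of_pow]
      norm_num
    have e2 : RFG.D (FreeGroup.of i0) (FreeGroup.of i0) = 0 := by
      unfold RFG.D
      rw [inv_mul_cancel]
      simp
    have e3 : RFG.D (1 : FreeGroup (Fin n)) (FreeGroup.of i0) = 1 := by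
      unfold RFG.D
      rw [inv_one, one_mul, FreeGroup.norm_of]
      norm_num
    have e4 : RFG.D (FreeGroup.of i0 ^ 2) (FreeGroup.of i0) = 1 := by
      unfold RFG.D
      rw [show (FreeGroup.of i0 ^ 2)⁻¹ * FreeGroup.of i0 = (FreeGroup.of i0)⁻¹ by group,
        FreeGroup.norm_inv_eq, FreeGroup.norm_of]
      norm_num
    rw [e1, e2, e3, e4] at h
    rw [Real.zero_rpow (by linarith : q ≠ 0), Real.one_rpow] at h
    have h4 : (2 : ℝ) ^ q ≤ (2 : ℝ) ^ (2 : ℝ) := by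
      have : (2 : ℝ) ^ (2 : ℝ) = 4 := by
        rw [show (2 : ℝ) = ((2 : ℕ) : ℝ) by norm_num, Real.rpow_natCast]
        norm_num
      rw [this]
      linarith
    exact (Real.rpow_le_rpow_left_iff one_lt_two).1 h4
  apply le_antisymm
  · apply sSup_le
    rintro e ⟨q, hqmem, rfl⟩
    show (q : EReal) ≤ (2 : EReal)
    rw [show (2 : EReal) = ((2 : ℝ) : EReal) from rfl]
    exact EReal.coe_le_coe_iff.2 (hub q hqmem)
  · have hle : ((2 : ℝ) : EReal) ≤ sSup ((fun q : ℝ => (q : EReal)) '' roundnessSet (RFG.D (α := Fin n))) :=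
      le_sSup ⟨2, h2mem, rfl⟩
    rw [roundness]
    exact hle
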